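/- Let ε > 0, θe > 0, α > 0, and ξ ∈ ℝ³ with ξ ≠ 0, and let {ξ1, ξ2} be an orthonormal basis of ξ^⊥ with ξ1 × ξ2 = ξ/|ξ|. Then the following three vectors of ℂ^14 all lie in the kernel of A_0(ε,ξ): e_0 := ( ξ/|ξ|, 0, 0, 0, 0, 0 ); the longitudinal acoustic vector f := (1 + θe²|ξ|²)^{−1/2} ( 0, −i θe ξ, 0, 1, 0, −1/α ); and the transverse acoustic vector g := (1 + |ξ|²)^{−1/2} ( ξ2, 0, i |ξ| ξ1, 0, 0, 0 ). That is, A_0(ε,ξ) e_0 = 0, A_0(ε,ξ) f = 0 and A_0(ε,ξ) g = 0. -/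

import Mathlib

noncomputable section

open scoped Matrix

/-- The state space `ℂ³ × ℂ³ × ℂ³ × ℂ × ℂ³ × ℂ` of the linearized Euler–Maxwell system,
with coordinates `(B, E, v_e, n_e, v_i, n_i)`. -/
abbrev EMSpace :=
  (Fin 3 → ℂ) × (Fin 3 → ℂ) × (Fin 3 → ℂ) × ℂ × (Fin 3 → ℂ) × ℂ

/-- Complexification of a real frequency vector. -/
def ξC (ξ : Fin 3 → ℝ) : Fin 3 → ℂ := fun i => (ξ i : ℂ)

/-- The Euler–Maxwell symbol `A₀(ε,ξ)` at `u = 0`, acting on `(B,E,v_e,n_e,v_i,n_i)` by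
`A₀(ε,ξ)u = (ξ×E, −ξ×B + i v_e − i(ε/θe) v_i, −i E + θe ξ n_e, θe ξ·v_e,
i(ε/θe) E + εα ξ n_i, εα ξ·v_i)`. -/
def emSymbol (ε θe α : ℝ) (ξ : Fin 3 → ℝ) (u : EMSpace) : EMSpace :=
  ( crossProduct (ξC ξ) u.2.1,
    -(crossProduct (ξC ξ) u.1) + Complex.I • u.2.2.1
      - (Complex.I * ((ε / θe : ℝ) : ℂ)) • u.2.2.2.2.1,
    -(Complex.I • u.2.1) + ((θe : ℂ) * u.2.2.2.1) • ξC ξ,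
    (θe : ℂ) * ∑ i, ξC ξ i * u.2.2.1 i,
    (Complex.I * ((ε / θe : ℝ) : ℂ)) • u.2.1 + (((ε * α : ℝ) : ℂ) * u.2.2.2.2.2) • ξC ξ,
    ((ε * α : ℝ) : ℂ) * ∑ i, ξC ξ i * u.2.2.2.2.1 i )

/-- The convection operator `diag(0, 0, x I₃, x, y I₃, y)`. -/
def emConvection (x y : ℝ) (u : EMSpace) : EMSpace :=
  (0, 0, (x : ℂ) • u.2.2.1, (x : ℂ) * u.2.2.2.1,
    (y : ℂ) • u.2.2.2.2.1, (y : ℂ) * u.2.2.2.2.2)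

/-- Euclidean length of a real 3-vector. -/
def len3 (ξ : Fin 3 → ℝ) : ℝ := Real.sqrt (∑ i, ξ i ^ 2)

/-- Real dot product. -/
def dot3 (a b : Fin 3 → ℝ) : ℝ := ∑ i, a i * b i

/-- **Kernel vectors of the Euler–Maxwell symbol at `u = 0`.**
Let `ξ ≠ 0` and `{ξ1, ξ2}` an orthonormal basis of `ξ^⊥` with `ξ1 × ξ2 = ξ/|ξ|`. Then
`e₀ = (ξ/|ξ|,0,0,0,0,0)`, the longitudinal acoustic vector
`f = (1+θe²|ξ|²)^{−1/2}(0, −iθe ξ, 0, 1, 0, −1/α)` and the transverse acoustic vector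
`g = (1+|ξ|²)^{−1/2}(ξ2, 0, i|ξ|ξ1, 0, 0, 0)` all lie in the kernel of `A₀(ε,ξ)`. -/
lemma xC_cross (a b : Fin 3 → ℝ) :
    crossProduct (ξC a) (ξC b) = ξC (crossProduct a b) := by
  funext i
  fin_cases i <;> simp [crossProduct, ξC] <;> push_cast <;> ring

theorem stmt_16 (ε θe α : ℝ) (hε : 0 < ε) (hθe : 0 < θe) (hα : 0 < α)
    (ξ ξ1 ξ2 : Fin 3 → ℝ) (hξ : ξ ≠ 0)
    (hξ1 : len3 ξ1 = 1) (hξ2 : len3 ξ2 = 1)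
    (hperp1 : dot3 ξ ξ1 = 0) (hperp2 : dot3 ξ ξ2 = 0) (hperp12 : dot3 ξ1 ξ2 = 0)
    (hcross : crossProduct ξ1 ξ2 = (len3 ξ)⁻¹ • ξ) :
    let e0 : EMSpace := ( ((len3 ξ)⁻¹ : ℝ) • ξC ξ, 0, 0, 0, 0, 0 )
    let f : EMSpace :=
      (((1 + θe ^ 2 * len3 ξ ^ 2 : ℝ) ^ (-(1:ℝ)/2) : ℝ) : ℂ) •
        ( (0 : Fin 3 → ℂ), (-(Complex.I * (θe : ℂ))) • ξC ξ, (0 : Fin 3 → ℂ),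
          (1 : ℂ), (0 : Fin 3 → ℂ), (-(1 / (α : ℂ))) )
    let g : EMSpace :=
      (((1 + len3 ξ ^ 2 : ℝ) ^ (-(1:ℝ)/2) : ℝ) : ℂ) •
        ( ξC ξ2, (0 : Fin 3 → ℂ), (Complex.I * ((len3 ξ : ℝ) : ℂ)) • ξC ξ1,
          (0 : ℂ), (0 : Fin 3 → ℂ), (0 : ℂ) )
    emSymbol ε θe α ξ e0 = 0 ∧ emSymbol ε θe α ξ f = 0 ∧ emSymbol ε θe α ξ g = 0 := by
  intro e0 f g
  have hθe' : (θe : ℂ) ≠ 0 := by exact_mod_cast hθe.ne'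
  have hα' : (α : ℂ) ≠ 0 := by exact_mod_cast hα.ne'
  have hL2 : 0 < ∑ i, ξ i ^ 2 := by
    rcases Function.ne_iff.mp hξ with ⟨i, hi⟩
    have h1 : 0 < ξ i ^ 2 := (sq_nonneg _).lt_of_ne (Ne.symm (pow_ne_zero 2 hi))
    calc 0 < ξ i ^ 2 := h1
      _ ≤ ∑ j, ξ j ^ 2 :=
        Finset.single_le_sum (f := fun j => ξ j ^ 2) (fun j _ => sq_nonneg _)
          (Finset.mem_univ i)
  have hL : 0 < len3 ξ := Real.sqrt_pos.mpr hL2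
  have h2 : ξ2 0 ^ 2 + ξ2 1 ^ 2 + ξ2 2 ^ 2 = 1 := by
    have := Real.sqrt_eq_one.mp hξ2
    simpa [Fin.sum_univ_three] using this
  have hp12 : ξ1 0 * ξ2 0 + ξ1 1 * ξ2 1 + ξ1 2 * ξ2 2 = 0 := by
    simpa [dot3, Fin.sum_univ_three] using hperp12
  have hp1 : ξ 0 * ξ1 0 + ξ 1 * ξ1 1 + ξ 2 * ξ1 2 = 0 := by
    simpa [dot3, Fin.sum_univ_three] using hperp1
  set L := len3 ξ with hLdef
  have hx : ∀ i, ξ i = L * (crossProduct ξ1 ξ2) i := by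
    intro i
    have h := congrFun hcross i
    simp only [Pi.smul_apply, smul_eq_mul] at h
    rw [h]
    field_simp
  have hkey : crossProduct ξ ξ2 = (-L) • ξ1 := by
    have e0' := hx 0; have e1 := hx 1; have e2 := hx 2
    simp [crossProduct] at e0' e1 e2
    funext i
    fin_cases i <;> simp [crossProduct]
    · linear_combination ξ2 2 * e1 - ξ2 1 * e2 + L * ξ2 0 * hp12 - L * ξ1 0 * h2
    · linear_combination ξ2 0 * e2 - ξ2 2 * e0' + L * ξ2 1 * hp12 - L * ξ1 1 * h2
    · linear_combination ξ2 1 * e0' - ξ2 0 * e1 + L * ξ2 2 * hp12 - L * ξ1 2 * h2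
  refine ⟨?_, ?_, ?_⟩
  · show emSymbol ε θe α ξ e0 = (0, 0, 0, 0, 0, 0)
    simp only [emSymbol, e0]
    refine Prod.ext ?_ (Prod.ext ?_ (Prod.ext ?_ (Prod.ext ?_ (Prod.ext ?_ ?_)))) <;>
      simp [cross_self, map_smul]
  · show emSymbol ε θe α ξ f = (0, 0, 0, 0, 0, 0)
    simp only [emSymbol, f, Prod.smul_mk, smul_zero, smul_eq_mul]
    refine Prod.ext ?_ (Prod.ext ?_ (Prod.ext ?_ (Prod.ext ?_ (Prod.ext ?_ ?_)))) <;>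
      simp [cross_self, map_smul, smul_smul]
    · funext i
      simp only [Pi.add_apply, Pi.smul_apply, smul_eq_mul, Pi.zero_apply]
      linear_combination ((((1 + θe ^ 2 * len3 ξ ^ 2 : ℝ) ^ (-(1:ℝ)/2) : ℝ) : ℂ) * (θe : ℂ) * ξC ξ i) * Complex.I_sq
    · funext i
      simp only [Pi.add_apply, Pi.neg_apply, Pi.smul_apply, smul_eq_mul, Pi.zero_apply]
      push_cast
      field_simp
      linear_combination (-(ε : ℂ) * (((1 + θe ^ 2 * len3 ξ ^ 2 : ℝ) ^ (-(1/2) : ℝ) : ℝ) : ℂ) * ξC ξ i) * Complex.I_sq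
  · show emSymbol ε θe α ξ g = (0, 0, 0, 0, 0, 0)
    simp only [emSymbol, g, Prod.smul_mk, smul_zero, smul_eq_mul]
    refine Prod.ext ?_ (Prod.ext ?_ (Prod.ext ?_ (Prod.ext ?_ (Prod.ext ?_ ?_)))) <;>
      simp [cross_self, map_smul, smul_smul]
    · rw [show crossProduct (ξC ξ) (ξC ξ2) = ξC (crossProduct ξ ξ2) from xC_cross ξ ξ2, hkey]
      funext i
      simp [ξC, Pi.smul_apply, smul_eq_mul]
      ring_nf
      simp [Complex.I_sq]
      rw [hLdef]
      ring
    · right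
      have hp1C : ((ξ 0 : ℂ)) * (ξ1 0 : ℂ) + (ξ 1 : ℂ) * (ξ1 1 : ℂ) + (ξ 2 : ℂ) * (ξ1 2 : ℂ) = 0 := by
        exact_mod_cast congrArg (fun x : ℝ => (x : ℂ)) hp1
      simp only [Fin.sum_univ_three, ξC]
      linear_combination ((((1 + len3 ξ ^ 2 : ℝ) ^ (-(1:ℝ)/2) : ℝ) : ℂ) * Complex.I * ((len3 ξ : ℝ) : ℂ)) * hp1C

end
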